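/- Let C be a finite multiset of instance values with P(C) ≥ 1, let ŷ_minpos be the minimal prediction value among the positive elements of C, and let C_{≥} ⊆ C be the sub-multiset of all elements (y, ŷ) of C with ŷ ≥ ŷ_minpos. Then PRAUC(C) = PRAUC(C_{≥}). -/

import Mathlib

/-- An instance value: a label (`true` = positive, i.e. `y = 1`;
`false` = negative, i.e. `y = 0`) together with a real prediction score. -/
abbrev Inst : Type := Bool × ℝ

/-- `P C`: the number of positive elements of `C`. -/
def P (C : Multiset Inst) : ℕ := (C.filter (fun c => c.1 = true)).card

/-- `N C`: the number of negative elements of `C`. -/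
def N (C : Multiset Inst) : ℕ := (C.filter (fun c => c.1 = false)).card

/-- `TP C t`: the number of positives of `C` with prediction strictly above `t`. -/
noncomputable def TP (C : Multiset Inst) (t : ℝ) : ℕ :=
  (C.filter (fun c => c.1 = true ∧ t < c.2)).card

/-- `FP C t`: the number of negatives of `C` with prediction strictly above `t`. -/
noncomputable def FP (C : Multiset Inst) (t : ℝ) : ℕ :=
  (C.filter (fun c => c.1 = false ∧ t < c.2)).card

/-- The ROC/PR supporting points `(TP, FP)` of `C`, listed in order of
decreasing threshold, for `t` ranging over the prediction values occurring in
`C` together with `t = -∞` (the latter yielding the final point `(P C, N C)`). -/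
noncomputable def supportingPoints (C : Multiset Inst) : List (ℝ × ℝ) :=
  (((C.map Prod.snd).toFinset.sort (· ≤ ·)).reverse.map
    (fun t => ((TP C t : ℝ), (FP C t : ℝ)))) ++ [((P C : ℝ), (N C : ℝ))]

/-- The trapezoidal sum `Σ_{i=2}^{k} |FP_i − FP_{i−1}| · (TP_i + TP_{i−1})/2`
over a list of `(TP, FP)` points. -/
noncomputable def trapROC : List (ℝ × ℝ) → ℝ
  | [] => 0
  | [_] => 0
  | a :: b :: l => |b.2 - a.2| * (b.1 + a.1) / 2 + trapROC (b :: l)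

/-- The area under the ROC curve of `C` (defined whenever `P C ≥ 1` and `N C ≥ 1`). -/
noncomputable def ROCAUC (C : Multiset Inst) : ℝ :=
  trapROC (supportingPoints C) / ((P C : ℝ) * (N C : ℝ))

/-- The trapezoidal sum `Σ_{i=2}^{k} |TP_i − TP_{i−1}| ·
(TP_i/(TP_i+FP_i) + TP_{i−1}/(TP_{i−1}+FP_{i−1}))/2` over a list of `(TP, FP)`
points; in `ℝ`, division by zero yields `0`, realizing the convention `0/0 = 0`. -/
noncomputable def trapPR : List (ℝ × ℝ) → ℝ
  | [] => 0
  | [_] => 0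
  | a :: b :: l =>
      |b.1 - a.1| * (b.1 / (b.1 + b.2) + a.1 / (a.1 + a.2)) / 2 + trapPR (b :: l)

/-- The (linearly interpolated) area under the PR curve of `C`
(defined whenever `P C ≥ 1`). -/
noncomputable def PRAUC (C : Multiset Inst) : ℝ :=
  trapPR (supportingPoints C) / (P C : ℝ)

private lemma trapPR_cons_cons (a b : ℝ × ℝ) (l : List (ℝ × ℝ)) :
    trapPR (a :: b :: l) =
      |b.1 - a.1| * (b.1 / (b.1 + b.2) + a.1 / (a.1 + a.2)) / 2 + trapPR (b :: l) := rfl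

private lemma trapPR_append_cons (l : List (ℝ × ℝ)) (a : ℝ × ℝ) (r : List (ℝ × ℝ)) :
    trapPR (l ++ a :: r) = trapPR (l ++ [a]) + trapPR (a :: r) := by
  induction l with
  | nil =>
    cases r with
    | nil => simp [trapPR]
    | cons b r => simp [trapPR]
  | cons x l ih =>
    cases l with
    | nil =>
      cases r with
      | nil => simp [trapPR]
      | cons b r =>
        simp only [List.nil_append, List.cons_append, trapPR_cons_cons]
        have : trapPR [a] = 0 := rfl
        rw [this]; ring
    | cons y l' =>
      simp only [List.cons_append, trapPR_cons_cons] at ih ⊢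
      rw [ih]; ring

private lemma trapPR_eq_zero (x : ℝ) : ∀ (r : List (ℝ × ℝ)), (∀ p ∈ r, p.1 = x) → trapPR r = 0
  | [], _ => rfl
  | [_], _ => rfl
  | a :: b :: l, h => by
    rw [trapPR_cons_cons,
      trapPR_eq_zero x (b :: l) (fun p hp => h p (List.mem_cons_of_mem _ hp)),
      h a List.mem_cons_self, h b (List.mem_cons_of_mem _ List.mem_cons_self)]
    simp

private lemma sorted_filter_ge (m : ℝ) : ∀ (s : List ℝ), s.Pairwise (· ≤ ·) →
    s.filter (fun t => decide (m ≤ t)) = s.dropWhile (fun t => decide (t < m))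
  | [], _ => rfl
  | a :: s, hs => by
    by_cases ha : m ≤ a
    · rw [List.filter_cons_of_pos (by simpa), List.dropWhile_cons_of_neg (by simp [not_lt.mpr ha])]
      congr 1
      exact List.filter_eq_self.mpr fun t ht => by
        simpa using le_trans ha (List.rel_of_pairwise_cons hs ht)
    · rw [List.filter_cons_of_neg (by simpa using lt_of_not_ge ha), List.dropWhile_cons_of_pos (by simpa using lt_of_not_ge ha)]
      exact sorted_filter_ge m s hs.of_cons

private lemma le_getLast_of_sorted : ∀ (l : List ℝ), l.Pairwise (· ≤ ·) → ∀ (h : l ≠ []) (a : ℝ),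
    a ∈ l → a ≤ l.getLast h
  | [b], _, _, a, ha => by simp_all [List.getLast]
  | b :: c :: l, hs, _, a, ha => by
    rw [List.getLast_cons (by simp)]
    rcases List.mem_cons.mp ha with rfl | ha
    · exact le_trans (List.rel_of_pairwise_cons hs List.mem_cons_self)
        (le_getLast_of_sorted (c :: l) hs.of_cons (by simp) c List.mem_cons_self)
    · exact le_getLast_of_sorted (c :: l) hs.of_cons (by simp) a ha

/-- Let `c₀` be a positive element of `C` with minimal
prediction value `ŷ_minpos = c₀.2` among the positives of `C`, and let
`C_{≥}` be the sub-multiset of all elements of `C` whose prediction value is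
at least `ŷ_minpos`.  Then `PRAUC C = PRAUC C_{≥}`. -/
theorem prauc_eq_prauc_filter_ge_minpos (C : Multiset Inst) (hP : 1 ≤ P C)
    (c₀ : Inst) (hc₀ : c₀ ∈ C) (hpos : c₀.1 = true)
    (hmin : ∀ c ∈ C, c.1 = true → c₀.2 ≤ c.2) :
    PRAUC C = PRAUC (C.filter (fun c => c₀.2 ≤ c.2)) := by
  set m := c₀.2 with hm
  by_cases hall : ∀ c ∈ C, m ≤ c.2
  · rw [Multiset.filter_eq_self.mpr hall]
  set D := C.filter (fun c => m ≤ c.2) with hD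
  -- counting facts
  have hPD : P D = P C := by
    rw [hD]; unfold P
    rw [Multiset.filter_filter]
    exact congrArg Multiset.card (Multiset.filter_congr fun c hc =>
      ⟨fun h => h.1, fun h => ⟨h, hmin c hc h⟩⟩)
  have hTP : ∀ t, TP D t = TP C t := by
    intro t; rw [hD]; unfold TP
    rw [Multiset.filter_filter]
    exact congrArg Multiset.card (Multiset.filter_congr fun c hc =>
      ⟨fun h => h.1, fun h => ⟨h, hmin c hc h.1⟩⟩)
  have hFP : ∀ t, m ≤ t → FP D t = FP C t := by
    intro t ht; rw [hD]; unfold FP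
    rw [Multiset.filter_filter]
    exact congrArg Multiset.card (Multiset.filter_congr fun c hc =>
      ⟨fun h => h.1, fun h => ⟨h, le_of_lt (lt_of_le_of_lt ht h.2)⟩⟩)
  have hTPC : ∀ t, t < m → TP C t = P C := by
    intro t ht; unfold TP P
    exact congrArg Multiset.card (Multiset.filter_congr fun c hc =>
      ⟨fun h => h.1, fun h => ⟨h, lt_of_lt_of_le ht (hmin c hc h)⟩⟩)
  -- sorted value lists
  set V := (C.map Prod.snd).toFinset with hV
  set s := V.sort (· ≤ ·) with hs
  have hVD : (D.map Prod.snd).toFinset = V.filter (fun v => m ≤ v) := by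
    ext v
    simp only [hV, hD, Multiset.mem_toFinset, Multiset.mem_map, Multiset.mem_filter,
      Finset.mem_filter]
    constructor
    · rintro ⟨c, ⟨hc, hmc⟩, rfl⟩; exact ⟨⟨c, hc, rfl⟩, hmc⟩
    · rintro ⟨⟨c, hc, rfl⟩, hmc⟩; exact ⟨c, ⟨hc, hmc⟩, rfl⟩
  have hsortD : (D.map Prod.snd).toFinset.sort (· ≤ ·) =
      s.filter (fun t => decide (m ≤ t)) := by
    refine (fun h1 h2 h3 => List.Perm.eq_of_pairwise' (r := (· ≤ ·)) h2 h3 h1) ?_ ?_ ?_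
    · apply List.perm_of_nodup_nodup_toFinset_eq (Finset.sort_nodup _ _)
        ((Finset.sort_nodup _ _).filter _)
      rw [Finset.sort_toFinset, List.toFinset_filter, Finset.sort_toFinset, hVD]
      congr 1
      exact funext fun v => by simp
    · exact Finset.pairwise_sort _ _
    · exact (Finset.pairwise_sort _ _).filter _
  have hsplit := List.takeWhile_append_dropWhile (p := fun t => decide (t < m)) (l := s)
  set l₂ := s.takeWhile (fun t => decide (t < m)) with hl₂def
  set l₁ := s.dropWhile (fun t => decide (t < m)) with hl₁def
  have hfilt : s.filter (fun t => decide (m ≤ t)) = l₁ :=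
    sorted_filter_ge m s (Finset.pairwise_sort _ _)
  have ht₁mem : ∀ t ∈ l₁, m ≤ t := by
    intro t ht; rw [← hfilt] at ht; simpa using List.of_mem_filter ht
  have ht₂mem : ∀ t ∈ l₂, t < m := by
    intro t ht; simpa using List.mem_takeWhile_imp ht
  have hmemV : ∀ c ∈ C, c.2 ∈ s := by
    intro c hc
    rw [hs, Finset.mem_sort, hV, Multiset.mem_toFinset, Multiset.mem_map]
    exact ⟨c, hc, rfl⟩
  have hl₂ne : l₂ ≠ [] := by
    push_neg at hall
    obtain ⟨c, hc, hcm⟩ := hall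
    intro hnil
    have : c.2 ∈ l₂ ++ l₁ := by rw [hsplit]; exact hmemV c hc
    rw [hnil, List.nil_append] at this
    exact absurd (ht₁mem _ this) (not_le.mpr hcm)
  set t₁ := l₂.getLast hl₂ne with ht₁
  have ht₁l₂ : t₁ ∈ l₂ := List.getLast_mem hl₂ne
  have ht₁m : t₁ < m := ht₂mem _ ht₁l₂
  have hsortl₂ : l₂.Pairwise (· ≤ ·) :=
    (Finset.pairwise_sort (α := ℝ) V (· ≤ ·)).sublist (List.takeWhile_sublist _)
  have hmax : ∀ v ∈ s, v < m → v ≤ t₁ := by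
    intro v hv hvm
    have hvl₂ : v ∈ l₂ := by
      rw [← hsplit] at hv
      rcases List.mem_append.mp hv with h | h
      · exact h
      · exact absurd (ht₁mem _ h) (not_le.mpr hvm)
    exact le_getLast_of_sorted l₂ hsortl₂ hl₂ne v hvl₂
  have hTPt₁ : TP C t₁ = P C := hTPC t₁ ht₁m
  have hFPt₁ : FP C t₁ = N D := by
    rw [hD]; unfold FP N
    rw [Multiset.filter_filter]
    refine congrArg Multiset.card (Multiset.filter_congr fun c hc => ⟨fun h => ⟨h.1, ?_⟩,
      fun h => ⟨h.1, lt_of_lt_of_le ht₁m h.2⟩⟩)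
    by_contra hcm
    exact absurd h.2 (not_lt.mpr (hmax c.2 (hmemV c hc) (lt_of_not_ge hcm)))
  -- decompose supporting points
  set f : ℝ → ℝ × ℝ := fun t => ((TP C t : ℝ), (FP C t : ℝ)) with hf
  have hl₂split : l₂ = l₂.dropLast ++ [t₁] := (List.dropLast_append_getLast hl₂ne).symm
  have hspC : supportingPoints C =
      l₁.reverse.map f ++ (f t₁ :: (l₂.dropLast.reverse.map f ++ [((P C : ℝ), (N C : ℝ))])) := by
    have hrev : l₂.reverse = t₁ :: l₂.dropLast.reverse := by
      conv_lhs => rw [hl₂split]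
      rw [List.reverse_append, List.reverse_singleton, List.singleton_append]
    unfold supportingPoints
    rw [← hs, ← hsplit, List.reverse_append, hrev, List.map_append, List.map_cons,
      List.append_assoc, List.cons_append]
  have hzero : trapPR (f t₁ :: (l₂.dropLast.reverse.map f ++ [((P C : ℝ), (N C : ℝ))])) = 0 := by
    apply trapPR_eq_zero (P C : ℝ)
    intro p hp
    rcases List.mem_cons.mp hp with rfl | hp
    · simp [hf, hTPt₁]
    rcases List.mem_append.mp hp with hp | hp
    · obtain ⟨t, ht, rfl⟩ := List.mem_map.mp hp
      have : t ∈ l₂ := by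
        rw [hl₂split]
        exact List.mem_append_left _ (List.mem_reverse.mp ht)
      simp [hf, hTPC t (ht₂mem t this)]
    · simp at hp; simp [hp]
  have hspD : supportingPoints D =
      l₁.reverse.map f ++ [((P C : ℝ), (N D : ℝ))] := by
    unfold supportingPoints
    rw [hsortD, hfilt, hPD]
    congr 1
    apply List.map_congr_left
    intro t ht
    have htm : m ≤ t := ht₁mem t (List.mem_reverse.mp ht)
    simp [hf, hTP, hFP t htm]
  have key : trapPR (supportingPoints C) = trapPR (supportingPoints D) := by
    rw [hspC, trapPR_append_cons, hzero, add_zero, hspD]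
    congr 2
    simp [hf, hTPt₁, hFPt₁]
  unfold PRAUC
  rw [key, hPD]
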